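/- Let (G_{ij}, p_{ij}, h_{ij}) be a direct sequence of towers of countable groups. For i, j, k ∈ ℕ let G_{ij}^{(k)} ⊆ G_{ij} be the image of the composite vertical bonding homomorphism G_{kj} → G_{ij} when k ≥ i, and let G_{ij}^{(k)} = G_{ij} when k < i. For fixed i, j the subgroups G_{ij}^{(k)} decrease in k and form a tower with inclusion bonding maps; let Γ_{ij} = lim¹_k G_{ij}^{(k)} (the pointed orbit set). Each p_{ij} maps G_{i+1,j}^{(k)} into G_{ij}^{(k)} and hence induces a pointed map Γ_{i+1,j} → Γ_{ij}, making (Γ_{ij})_i a tower of pointed sets; let Γ_j = lim_i Γ_{ij} be its pointed set of threads. Each h_{ij} maps G_{ij}^{(k)} into G_{i,j+1}^{(k)} and hence induces pointed maps Γ_j → Γ_{j+1}, with composites Γ_j → Γ_k for j ≤ k. Suppose that for every j and every γ ∈ Γ_j there exists k ≥ j such that the composite map Γ_j → Γ_k sends γ to the basepoint. Then for each j there exists k > j such that the composite map Γ_j → Γ_k is trivial (sends every element to the basepoint). -/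

import Mathlib

/-- The composite vertical bonding homomorphism `G_{i+m,j} → G_{i,j}`
(the identity when `m = 0`). -/
def pDown (G : ℕ → ℕ → Type*) [∀ i j, Group (G i j)]
    (p : ∀ i j, G (i + 1) j →* G i j) (j : ℕ) : ∀ (m i : ℕ), G (i + m) j →* G i j
  | 0, _ => MonoidHom.id _
  | m + 1, i => (pDown G p j m i).comp (p (i + m) j)

/-- `G_{ij}^{(k)}`: the image of the composite vertical bonding homomorphism
`G_{kj} → G_{ij}` when `k ≥ i`, and all of `G_{ij}` when `k < i` (since `k - i = 0`
and the composite is then the identity). -/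
def imgSub (G : ℕ → ℕ → Type*) [∀ i j, Group (G i j)]
    (p : ∀ i j, G (i + 1) j →* G i j) (i j k : ℕ) : Subgroup (G i j) :=
  (pDown G p j (k - i) i).range

/-- Two families `g, g'` indexed by `k` with values in the subgroups `G_{ij}^{(k)}`
represent the same element of `Γ_{ij} = lim¹_k G_{ij}^{(k)}` iff they lie in the same
orbit of the standard action of `∏_k G_{ij}^{(k)}` on itself (the bonding maps of the
tower `(G_{ij}^{(k)})_k` being inclusions). -/
def OrbRel (G : ℕ → ℕ → Type*) [∀ i j, Group (G i j)]
    (p : ∀ i j, G (i + 1) j →* G i j) (i j : ℕ) (g g' : ℕ → G i j) : Prop :=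
  ∃ c : ℕ → G i j, (∀ k, c k ∈ imgSub G p i j k) ∧
    ∀ k, c k * g k * (c (k + 1))⁻¹ = g' k

/-- The composite horizontal homomorphism `G_{i,j} → G_{i,j+m}`
(the identity when `m = 0`). -/
def hIterM (G : ℕ → ℕ → Type*) [∀ i j, Group (G i j)]
    (h : ∀ i j, G i j →* G i (j + 1)) (i j : ℕ) : ∀ m, G i j →* G i (j + m)
  | 0 => MonoidHom.id _
  | m + 1 => (h i (j + m)).comp (hIterM G h i j m)

namespace StmtAux

variable {G : ℕ → ℕ → Type*} [∀ i j, Group (G i j)]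

def homOfEq (G : ℕ → ℕ → Type*) [∀ i j, Group (G i j)] (j' : ℕ) {a b : ℕ} (hab : a = b) :
    G a j' →* G b j' := by subst hab; exact MonoidHom.id _

@[simp] lemma homOfEq_rfl (j' a : ℕ) : homOfEq G j' (rfl : a = a) = MonoidHom.id _ := rfl

def pLE (p : ∀ i j, G (i + 1) j →* G i j) (j' i : ℕ) : ∀ n, G n j' →* G i j'
  | 0 => if h : 0 = i then homOfEq G j' h else 1
  | n + 1 => if h : n + 1 = i then homOfEq G j' h else (pLE p j' i n).comp (p n j')

variable (p : ∀ i j, G (i + 1) j →* G i j)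

lemma pLE_self (j' i : ℕ) : pLE p j' i i = MonoidHom.id _ := by
  cases i with
  | zero => simp [pLE]
  | succ n => simp [pLE]

lemma pLE_succ_of_le (j' : ℕ) {i n : ℕ} (hin : i ≤ n) :
    pLE p j' i (n + 1) = (pLE p j' i n).comp (p n j') := by
  rw [pLE, dif_neg (by omega)]

lemma pLE_eq_pDown (j' : ℕ) : ∀ (m i : ℕ), pLE p j' i (i + m) = pDown G p j' m i
  | 0, i => pLE_self p j' i
  | m + 1, i => by
    show pLE p j' i ((i + m) + 1) = _
    rw [pLE_succ_of_le p j' (Nat.le_add_right i m), pLE_eq_pDown j' m i]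
    rfl

lemma imgSub_eq_range {i k : ℕ} (j' : ℕ) (hik : i ≤ k) :
    imgSub G p i j' k = (pLE p j' i k).range := by
  rw [imgSub, ← pLE_eq_pDown p j' (k - i) i, Nat.add_sub_cancel' hik]

lemma imgSub_eq_top {i k : ℕ} (j' : ℕ) (hki : k ≤ i) : imgSub G p i j' k = ⊤ := by
  rw [imgSub, Nat.sub_eq_zero_of_le hki]
  exact MonoidHom.range_eq_top.2 (fun x => ⟨x, rfl⟩)

lemma pLE_mem_imgSub (j' : ℕ) (i n : ℕ) (x : G n j') :
    pLE p j' i n x ∈ imgSub G p i j' n := by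
  rcases le_or_gt i n with hin | hni
  · rw [imgSub_eq_range p j' hin]; exact ⟨x, rfl⟩
  · rw [imgSub_eq_top p j' hni.le]; trivial

lemma pLE_peel (j' : ℕ) {i n : ℕ} (hin : i + 1 ≤ n) :
    (p i j').comp (pLE p j' (i + 1) n) = pLE p j' i n := by
  induction n, hin using Nat.le_induction with
  | base =>
    rw [pLE_self, pLE_succ_of_le p j' (Nat.le_refl i), pLE_self]
    ext x; rfl
  | succ n hn ih =>
    rw [pLE_succ_of_le p j' hn, pLE_succ_of_le p j' (by omega : i ≤ n), ← ih]
    rfl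

lemma mem_imgSub_p {i k : ℕ} (j' : ℕ) {x : G (i + 1) j'} (hx : x ∈ imgSub G p (i + 1) j' k) :
    p i j' x ∈ imgSub G p i j' k := by
  rcases le_or_gt (i + 1) k with hik | hki
  · rw [imgSub_eq_range p j' hik] at hx
    obtain ⟨y, rfl⟩ := hx
    rw [imgSub_eq_range p j' (by omega)]
    exact ⟨y, by rw [← pLE_peel p j' hik]; rfl⟩
  · rw [imgSub_eq_top p j' (by omega)]; trivial

lemma imgSub_anti {i k k' : ℕ} (j' : ℕ) (hkk : k ≤ k') :
    imgSub G p i j' k' ≤ imgSub G p i j' k := by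
  induction k', hkk using Nat.le_induction with
  | base => exact le_rfl
  | succ k' hk ih =>
    refine le_trans ?_ ih
    rcases le_or_gt i k' with hik | hki
    · rw [imgSub_eq_range p j' hik, imgSub_eq_range p j' (by omega),
        pLE_succ_of_le p j' hik]
      rintro x ⟨y, rfl⟩; exact ⟨p k' j' y, rfl⟩
    · rw [imgSub_eq_top p j' hki.le]
      exact le_top


section h
variable (h : ∀ i j, G i j →* G i (j + 1))
variable (hcomm : ∀ i j (g : G (i + 1) j), h i j (p i j g) = p i (j + 1) (h (i + 1) j g))
include hcomm

lemma hIter_pDown (j' : ℕ) : ∀ (m i : ℕ) (x : G (i + m) j'),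
    h i j' (pDown G p j' m i x) = pDown G p (j' + 1) m i (h (i + m) j' x)
  | 0, i, x => rfl
  | m + 1, i, x => by
    show h i j' (pDown G p j' m i (p (i + m) j' x)) = pDown G p (j'+1) m i (p (i+m) (j'+1) (h (i+m+1) j' x))
    rw [hIter_pDown j' m i (p (i + m) j' x), hcomm (i + m) j' x]

lemma mem_imgSub_h {i k : ℕ} (j' : ℕ) {x : G i j'} (hx : x ∈ imgSub G p i j' k) :
    h i j' x ∈ imgSub G p i (j' + 1) k := by
  obtain ⟨y, rfl⟩ := hx
  exact ⟨h (i + (k - i)) j' y, (hIter_pDown p h hcomm j' (k - i) i y).symm⟩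

lemma mem_imgSub_hIter {i k : ℕ} (j' : ℕ) {x : G i j'} (m : ℕ) (hx : x ∈ imgSub G p i j' k) :
    hIterM G h i j' m x ∈ imgSub G p i (j' + m) k := by
  induction m with
  | zero => exact hx
  | succ m ih => exact mem_imgSub_h p h hcomm (j' + m) ih

end h

/-- ordered partial products -/
def PP {M : Type*} [Monoid M] (u : ℕ → M) : ℕ → M
  | 0 => 1
  | k + 1 => PP u k * u k

lemma PP_congr {M : Type*} [Monoid M] {u u' : ℕ → M} :
    ∀ {k : ℕ}, (∀ l, l < k → u l = u' l) → PP u k = PP u' k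
  | 0, _ => rfl
  | k + 1, hl => by
    show PP u k * u k = PP u' k * u' k
    rw [PP_congr (fun l hlk => hl l (by omega)), hl k (by omega)]

section orb
variable {i j' : ℕ}

lemma orb_symm {a b : ℕ → G i j'} (hab : OrbRel G p i j' a b) : OrbRel G p i j' b a := by
  obtain ⟨c, mc, ec⟩ := hab
  refine ⟨fun k => (c k)⁻¹, fun k => inv_mem (mc k), fun k => ?_⟩
  have := ec k
  rw [← this]
  group

lemma orb_trans {a b c : ℕ → G i j'} (hab : OrbRel G p i j' a b) (hbc : OrbRel G p i j' b c) :
    OrbRel G p i j' a c := by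
  obtain ⟨d, md, ed⟩ := hab
  obtain ⟨e, me, ee⟩ := hbc
  refine ⟨fun k => e k * d k, fun k => mul_mem (me k) (md k), fun k => ?_⟩
  rw [mul_inv_rev, show e k * d k * a k * ((d (k+1))⁻¹ * (e (k+1))⁻¹) =
    e k * (d k * a k * (d (k+1))⁻¹) * (e (k+1))⁻¹ by group, ed k, ee k]

private def goC {M : Type*} [Group M] (a b : ℕ → M) : ℕ → ℕ → M
  | 0, _ => 1
  | f + 1, k => b k * goC a b f (k + 1) * (a k)⁻¹

lemma orb_of_tail {a b : ℕ → G i j'} (ma : ∀ k, a k ∈ imgSub G p i j' k)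
    (mb : ∀ k, b k ∈ imgSub G p i j' k) (K : ℕ) (hab : ∀ k, K ≤ k → a k = b k) :
    OrbRel G p i j' a b := by
  set c : ℕ → G i j' := fun k => goC a b (K - k) k with hc
  have hc1 : ∀ k, K ≤ k → c k = 1 := by
    intro k hk
    simp only [hc, Nat.sub_eq_zero_of_le hk]
    rfl
  have hc2 : ∀ k, k < K → c k = b k * c (k + 1) * (a k)⁻¹ := by
    intro k hk
    have e1 : K - k = (K - (k + 1)) + 1 := by omega
    simp only [hc, e1]
    rfl
  have hmem : ∀ d k, K - k ≤ d → c k ∈ imgSub G p i j' k := by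
    intro d
    induction d with
    | zero =>
      intro k hk
      rw [hc1 k (by omega)]
      exact one_mem _
    | succ d ih =>
      intro k hk
      rcases le_or_gt K k with hKk | hkK
      · rw [hc1 k hKk]; exact one_mem _
      · rw [hc2 k hkK]
        exact mul_mem (mul_mem (mb k) (imgSub_anti p j' (by omega) (ih (k+1) (by omega))))
          (inv_mem (ma k))
  refine ⟨c, fun k => hmem (K - k) k le_rfl, fun k => ?_⟩
  rcases le_or_gt K k with hKk | hkK
  · rw [hc1 k hKk, hc1 (k+1) (by omega), hab k hKk]
    group
  · rw [hc2 k hkK]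
    group

lemma orb_one_intro {u : ℕ → G i j'} (mu : ∀ k, u k ∈ imgSub G p i j' k) (c0 : G i j')
    (hc : ∀ k, c0 * PP u k ∈ imgSub G p i j' k) :
    OrbRel G p i j' u (fun _ => 1) := by
  refine ⟨fun k => c0 * PP u k, hc, fun k => ?_⟩
  show c0 * PP u k * u k * (c0 * (PP u k * u k))⁻¹ = 1
  group

lemma orb_one_elim {u : ℕ → G i j'} (hu : OrbRel G p i j' u (fun _ => 1)) :
    ∃ c0 : G i j', ∀ k, c0 * PP u k ∈ imgSub G p i j' k := by
  obtain ⟨c, mc, ec⟩ := hu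
  refine ⟨c 0, fun k => ?_⟩
  have key : ∀ k, c 0 * PP u k = c k := by
    intro k
    induction k with
    | zero => show c 0 * 1 = c 0; group
    | succ k ih =>
      have e1 : c k * u k * (c (k + 1))⁻¹ = 1 := ec k
      have e2 : c (k + 1) = c k * u k := (mul_inv_eq_one.mp e1).symm
      show c 0 * (PP u k * u k) = c (k + 1)
      rw [e2, ← ih]; group
  rw [key k]
  exact mc k

lemma escape_persist {u : ℕ → G i j'} (mu : ∀ k, u k ∈ imgSub G p i j' k) {x : G i j'}
    {k k' : ℕ} (hkk : k ≤ k') (hk : x * PP u k ∉ imgSub G p i j' k) :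
    x * PP u k' ∉ imgSub G p i j' k' := by
  induction k', hkk using Nat.le_induction with
  | base => exact hk
  | succ k' hk' ih =>
    intro hmem
    apply ih
    have : x * PP u k' = (x * PP u (k' + 1)) * (u k')⁻¹ := by
      show x * PP u k' = (x * (PP u k' * u k')) * (u k')⁻¹
      group
    rw [this]
    exact mul_mem (imgSub_anti p j' (by omega) hmem) (inv_mem (mu k'))

end orb

lemma orb_push (h : ∀ i j, G i j →* G i (j + 1))
    (hcomm : ∀ i j (g : G (i + 1) j), h i j (p i j g) = p i (j + 1) (h (i + 1) j g))
    {i j' : ℕ} {a b : ℕ → G i j'} (hab : OrbRel G p i j' a b) :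
    OrbRel G p i (j' + 1) (fun k => h i j' (a k)) (fun k => h i j' (b k)) := by
  obtain ⟨c, mc, ec⟩ := hab
  refine ⟨fun k => h i j' (c k), fun k => mem_imgSub_h p h hcomm j' (mc k), fun k => ?_⟩
  rw [← map_inv, ← map_mul, ← map_mul, ec k]

lemma step_exists (h : ∀ i j, G i j →* G i (j + 1))
    (hcomm : ∀ i j (g : G (i + 1) j), h i j (p i j g) = p i (j + 1) (h (i + 1) j g))
    (j i0 : ℕ) (u : ℕ → G i0 j) (mu : ∀ l, u l ∈ imgSub G p i0 j l) (m1 : ℕ)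
    (notOrb : ¬ OrbRel G p i0 (j + m1) (fun k => hIterM G h i0 j m1 (u k)) (fun _ => 1))
    (x : G i0 (j + m1)) (K : ℕ) (cols : ∀ l, G l j) :
    ∃ (K' : ℕ) (cols' : ∀ l, G l j) (k : ℕ), K < K' ∧ (∀ l, l < K → cols' l = cols l) ∧
      k ≤ K' ∧ x * PP (fun l => hIterM G h i0 j m1 (pLE p j i0 l (cols' l))) k ∉
        imgSub G p i0 (j + m1) k := by
  classical
  have hlift : ∀ l, ∃ t : G l j, i0 ≤ l → pLE p j i0 l t = u l := by
    intro l
    by_cases hl : i0 ≤ l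
    · have hm := mu l
      rw [imgSub_eq_range p j hl] at hm
      obtain ⟨t, ht⟩ := hm
      exact ⟨t, fun _ => ht⟩
    · exact ⟨1, fun h' => absurd h' hl⟩
  choose lift hlift using hlift
  have mrow : ∀ l, hIterM G h i0 j m1
      (pLE p j i0 l (if l < K + i0 then cols l else lift l)) ∈
      imgSub G p i0 (j + m1) l :=
    fun l => mem_imgSub_hIter p h hcomm j m1 (pLE_mem_imgSub p j i0 l _)
  have mvu : ∀ l, hIterM G h i0 j m1 (u l) ∈ imgSub G p i0 (j + m1) l :=
    fun l => mem_imgSub_hIter p h hcomm j m1 (mu l)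
  have horb : OrbRel G p i0 (j + m1)
      (fun l => hIterM G h i0 j m1 (pLE p j i0 l (if l < K + i0 then cols l else lift l)))
      (fun l => hIterM G h i0 j m1 (u l)) := by
    refine orb_of_tail p mrow mvu (K + i0) (fun l hl => ?_)
    rw [if_neg (by omega), hlift l (by omega)]
  have notOrb' : ¬ OrbRel G p i0 (j + m1)
      (fun l => hIterM G h i0 j m1 (pLE p j i0 l (if l < K + i0 then cols l else lift l)))
      (fun _ => 1) := fun hc => notOrb (orb_trans p (orb_symm p horb) hc)
  have hesc : ∃ k, x * PP (fun l => hIterM G h i0 j m1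
      (pLE p j i0 l (if l < K + i0 then cols l else lift l))) k ∉
      imgSub G p i0 (j + m1) k := by
    by_contra hno
    push_neg at hno
    exact notOrb' (orb_one_intro p mrow x hno)
  obtain ⟨k0, hk0⟩ := hesc
  refine ⟨k0 + K + 1, fun l => if l < K + i0 then cols l else lift l, k0 + K + 1,
    by omega, fun l hl => if_pos (by omega), le_rfl, ?_⟩
  exact escape_persist p mrow (by omega) hk0

end StmtAux

open StmtAux

/-- Theorem A(d): for a direct sequence of towers of countable groups, let
`Γ_{ij} = lim¹_k G_{ij}^{(k)}` (a pointed set) and `Γ_j = lim_i Γ_{ij}` (the pointed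
set of threads).  A thread of `Γ_j` is represented by a family `g : ∀ i, ℕ → G i j`
with `g i k ∈ G_{ij}^{(k)}`, such that for each `i` the image of `g (i+1)` under
`p_{ij}` is orbit-equivalent to `g i`; it maps to the basepoint of `Γ_{j+m}` iff each
coordinatewise horizontal image is orbit-equivalent to the constant family `1`.
If the colimit of the `Γ_j` is trivial, then for each `j` there is `k > j` such that
the composite map `Γ_j → Γ_k` is trivial. -/
theorem stmt_4 (G : ℕ → ℕ → Type*) [∀ i j, Group (G i j)] [∀ i j, Countable (G i j)]
    (p : ∀ i j, G (i + 1) j →* G i j) (h : ∀ i j, G i j →* G i (j + 1))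
    (hcomm : ∀ i j (g : G (i + 1) j), h i j (p i j g) = p i (j + 1) (h (i + 1) j g))
    (htriv : ∀ j (g : ∀ i, ℕ → G i j),
      (∀ i k, g i k ∈ imgSub G p i j k) →
      (∀ i, OrbRel G p i j (fun k => p i j (g (i + 1) k)) (g i)) →
      ∃ m, ∀ i, OrbRel G p i (j + m)
        (fun k => hIterM G h i j m (g i k)) (fun _ => 1)) :
    ∀ j, ∃ m, 0 < m ∧ ∀ g : ∀ i, ℕ → G i j,
      (∀ i k, g i k ∈ imgSub G p i j k) →
      (∀ i, OrbRel G p i j (fun k => p i j (g (i + 1) k)) (g i)) →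
      ∀ i, OrbRel G p i (j + m)
        (fun k => hIterM G h i j m (g i k)) (fun _ => 1) := by
  classical
  intro j
  by_contra hcon
  push_neg at hcon
  have sv : ∀ m : ℕ, ∃ g : ∀ i, ℕ → G i j, (∀ i k, g i k ∈ imgSub G p i j k) ∧
      (∀ i, OrbRel G p i j (fun k => p i j (g (i+1) k)) (g i)) ∧
      ∃ i, ¬ OrbRel G p i (j + (m+1)) (fun k => hIterM G h i j (m+1) (g i k)) (fun _ => 1) := by
    intro m
    obtain ⟨g, h1, h2, i, hi⟩ := hcon (m+1) (Nat.succ_pos m)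
    exact ⟨g, h1, h2, i, hi⟩
  choose sg smem scompat isg sbad using sv
  have esur : ∀ m : ℕ, ∃ f : ℕ → G (isg m) (j + (m+1)), Function.Surjective f :=
    fun m => exists_surjective_nat _
  choose es hes using esur
  have ALL : ∀ (m n K : ℕ) (cols : ∀ l, G l j), ∃ (K' : ℕ) (cols' : ∀ l, G l j) (k : ℕ),
      K < K' ∧ (∀ l, l < K → cols' l = cols l) ∧ k ≤ K' ∧
      es m n * PP (fun l => hIterM G h (isg m) j (m + 1)
        (pLE p j (isg m) l (cols' l))) k ∉ imgSub G p (isg m) (j + (m + 1)) k := by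
    intro m n K cols
    exact step_exists p h hcomm j (isg m) (sg m (isg m)) (fun l => smem m (isg m) l)
      (m + 1) (sbad m) (es m n) K cols
  choose FK Fc Fk hKlt hfrz hkle hesc using ALL
  obtain ⟨states, hs0, hsucc⟩ : ∃ states : ℕ → ℕ × (∀ l, G l j),
      states 0 = ((0 : ℕ), fun l => (1 : G l j)) ∧ ∀ t, states (t + 1) =
        (FK (Nat.unpair t).1 (Nat.unpair t).2 (states t).1 (states t).2,
         Fc (Nat.unpair t).1 (Nat.unpair t).2 (states t).1 (states t).2) :=
    ⟨fun t => Nat.rec ((0 : ℕ), fun l => (1 : G l j))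
      (fun t s => (FK (Nat.unpair t).1 (Nat.unpair t).2 s.1 s.2,
                   Fc (Nat.unpair t).1 (Nat.unpair t).2 s.1 s.2)) t, rfl, fun t => rfl⟩
  have hmonoK : ∀ t, (states t).1 < (states (t + 1)).1 := by
    intro t
    rw [hsucc t]
    exact hKlt _ _ _ _
  have hKmono : ∀ t t', t ≤ t' → (states t).1 ≤ (states t').1 := by
    intro t t' htt
    induction t', htt using Nat.le_induction with
    | base => exact le_rfl
    | succ t' htt ih => exact le_trans ih (hmonoK t').le
  have hKget : ∀ t, t ≤ (states t).1 := by
    intro t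
    induction t with
    | zero => exact Nat.zero_le _
    | succ t ih => exact lt_of_le_of_lt ih (hmonoK t)
  have hfz1 : ∀ t l, l < (states t).1 → (states (t + 1)).2 l = (states t).2 l := by
    intro t l hl
    rw [hsucc t]
    exact hfrz _ _ _ _ l hl
  have hfzc : ∀ t t', t ≤ t' → ∀ l, l < (states t).1 → (states t').2 l = (states t).2 l := by
    intro t t' htt
    induction t', htt using Nat.le_induction with
    | base => exact fun l _ => rfl
    | succ t' htt ih =>
      intro l hl
      rw [hfz1 t' l (lt_of_lt_of_le hl (hKmono t t' htt)), ih l hl]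
  have htc : ∀ t l, l < (states t).1 → (states (l + 1)).2 l = (states t).2 l := by
    intro t l hl
    rcases le_total t (l + 1) with htl | hlt
    · exact hfzc t (l + 1) htl l hl
    · exact (hfzc (l + 1) t hlt l (lt_of_lt_of_le (Nat.lt_succ_self l) (hKget (l + 1)))).symm
  have gm : ∀ i k, pLE p j i k ((states (k + 1)).2 k) ∈ imgSub G p i j k :=
    fun i k => pLE_mem_imgSub p j i k _
  have gc : ∀ i, OrbRel G p i j
      (fun k => p i j (pLE p j (i + 1) k ((states (k + 1)).2 k)))
      (fun k => pLE p j i k ((states (k + 1)).2 k)) := by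
    intro i
    refine orb_of_tail p (fun k => mem_imgSub_p p j (gm (i + 1) k)) (gm i) (i + 1)
      (fun k hk => ?_)
    exact DFunLike.congr_fun (pLE_peel p j hk) _
  obtain ⟨m0, hkill⟩ := htriv j (fun i k => pLE p j i k ((states (k + 1)).2 k)) gm gc
  have hkillup : ∀ m i, OrbRel G p i (j + (m0 + m))
      (fun k => hIterM G h i j (m0 + m) (pLE p j i k ((states (k + 1)).2 k)))
      (fun _ => 1) := by
    intro m
    induction m with
    | zero => exact hkill
    | succ m ih =>
      intro i
      have hp := orb_push p h hcomm (ih i)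
      simp only [map_one] at hp
      exact hp
  obtain ⟨c0, hc0⟩ := orb_one_elim p (hkillup 1 (isg m0))
  obtain ⟨n, hn⟩ := hes m0 c0
  have hup : Nat.unpair (Nat.pair m0 n) = (m0, n) := Nat.unpair_pair m0 n
  have e1 : (states (Nat.pair m0 n + 1)).1
      = FK m0 n (states (Nat.pair m0 n)).1 (states (Nat.pair m0 n)).2 := by
    rw [hsucc, hup]
  have e2 : (states (Nat.pair m0 n + 1)).2
      = Fc m0 n (states (Nat.pair m0 n)).1 (states (Nat.pair m0 n)).2 := by
    rw [hsucc, hup]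
  have hE := hesc m0 n (states (Nat.pair m0 n)).1 (states (Nat.pair m0 n)).2
  have hkb := hkle m0 n (states (Nat.pair m0 n)).1 (states (Nat.pair m0 n)).2
  apply hE
  have hPP : PP (fun l => hIterM G h (isg m0) j (m0 + 1)
        (pLE p j (isg m0) l (Fc m0 n (states (Nat.pair m0 n)).1 (states (Nat.pair m0 n)).2 l)))
        (Fk m0 n (states (Nat.pair m0 n)).1 (states (Nat.pair m0 n)).2)
      = PP (fun l => hIterM G h (isg m0) j (m0 + 1)
        (pLE p j (isg m0) l ((states (l + 1)).2 l)))
        (Fk m0 n (states (Nat.pair m0 n)).1 (states (Nat.pair m0 n)).2) := by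
    refine PP_congr (fun l hl => ?_)
    have hlK : l < (states (Nat.pair m0 n + 1)).1 := by
      rw [e1]; exact lt_of_lt_of_le hl hkb
    rw [← e2, htc (Nat.pair m0 n + 1) l hlK]
  rw [hPP, hn]
  exact hc0 (Fk m0 n (states (Nat.pair m0 n)).1 (states (Nat.pair m0 n)).2)
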